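/- Let Σ be a finite alphabet, let L ⊆ Σ* be a nonempty regular language, and let n = |{w⁻¹L : w ∈ Σ*}| be the number of distinct left quotients of L, with n > 2. Then the number of distinct unions of left quotients of L equals 2^n and the number of distinct intersections of left quotients of L equals 2^n if and only if for every w ∈ Σ* both of the following sets are nonempty: w⁻¹L \ ⋃ {u⁻¹L : u ∈ Σ*, u⁻¹L ≠ w⁻¹L} and (⋂ {u⁻¹L : u ∈ Σ*, u⁻¹L ≠ w⁻¹L}) \ w⁻¹L, where an intersection over an empty index family is Σ*. -/

import Mathlib

open Set

/-- The left quotient `w⁻¹L = {x : wx ∈ L}`. -/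
def leftQuot {α : Type*} (L : Set (List α)) (w : List α) : Set (List α) :=
  {x | w ++ x ∈ L}

/-- The right quotient `Lv⁻¹ = {u : uv ∈ L}`. -/
def rightQuot {α : Type*} (L : Set (List α)) (v : List α) : Set (List α) :=
  {u | u ++ v ∈ L}

/-- The left atom of `L` at `v`: the class of `v` under the left congruence of `L`. -/
def leftAtom {α : Type*} (L : Set (List α)) (v : List α) : Set (List α) :=
  {x | ∀ u : List α, u ++ x ∈ L ↔ u ++ v ∈ L}

/-- The right atom of `L` at `w`: the Nerode class of `w`. -/
def rightAtom {α : Type*} (L : Set (List α)) (w : List α) : Set (List α) :=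
  {u | ∀ x : List α, u ++ x ∈ L ↔ w ++ x ∈ L}

/-- `X` is a union of left quotients of `L`. -/
def IsUnionLeftQuot {α : Type*} (L : Set (List α)) (X : Set (List α)) : Prop :=
  ∃ W : Set (List α), X = ⋃ w ∈ W, leftQuot L w

/-- `Y` is a union of right quotients of `L`. -/
def IsUnionRightQuot {α : Type*} (L : Set (List α)) (Y : Set (List α)) : Prop :=
  ∃ W : Set (List α), Y = ⋃ v ∈ W, rightQuot L v

/-- `X` is an intersection of left quotients of `L` (empty intersection is `Σ*`). -/
def IsInterLeftQuot {α : Type*} (L : Set (List α)) (X : Set (List α)) : Prop :=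
  ∃ W : Set (List α), X = ⋂ w ∈ W, leftQuot L w

/-- `Y` is an intersection of right quotients of `L` (empty intersection is `Σ*`). -/
def IsInterRightQuot {α : Type*} (L : Set (List α)) (Y : Set (List α)) : Prop :=
  ∃ W : Set (List α), Y = ⋂ v ∈ W, rightQuot L v

/-- The map `Ψ(X) = ⋃ {Lv⁻¹ : v ∉ X}`. -/
def Psi {α : Type*} (L : Set (List α)) (X : Set (List α)) : Set (List α) :=
  ⋃ v ∈ {v : List α | v ∉ X}, rightQuot L v

/-- The map `Ψ'(Y) = ⋃ {u⁻¹L : u ∉ Y}`. -/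
def Psi' {α : Type*} (L : Set (List α)) (Y : Set (List α)) : Set (List α) :=
  ⋃ u ∈ {u : List α | u ∉ Y}, leftQuot L u

/-- The map `Φ(X) = ⋂ {Lv⁻¹ : v ∈ X}` (empty intersection is `Σ*`). -/
def Phi {α : Type*} (L : Set (List α)) (X : Set (List α)) : Set (List α) :=
  ⋂ v ∈ X, rightQuot L v

/-- The map `Φ'(Y) = ⋂ {u⁻¹L : u ∈ Y}` (empty intersection is `Σ*`). -/
def Phi' {α : Type*} (L : Set (List α)) (Y : Set (List α)) : Set (List α) :=
  ⋂ u ∈ Y, leftQuot L u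

/-- Regularity implies finitely many left quotients. -/
lemma quot_finite {α : Type*} {L : Set (List α)} (hL : Language.IsRegular L) :
    {X : Set (List α) | ∃ w : List α, X = leftQuot L w}.Finite := by
  obtain ⟨σ, _, M, hM⟩ := hL
  have hsub : {X : Set (List α) | ∃ w : List α, X = leftQuot L w} ⊆
      Set.range (fun s : σ => {x : List α | M.evalFrom s x ∈ M.accept}) := by
    rintro X ⟨w, rfl⟩
    refine ⟨M.eval w, ?_⟩
    ext x
    simp only [leftQuot, mem_setOf_eq]
    rw [← hM]
    show _ ↔ w ++ x ∈ (M.accepts : Language α)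
    rw [DFA.mem_accepts, DFA.eval, DFA.evalFrom_of_append]
  exact (Set.finite_range _).subset hsub

lemma ncard_powerset' {β : Type*} {Q : Set β} (hQ : Q.Finite) :
    {S : Set β | S ⊆ Q}.ncard = 2 ^ Q.ncard := by
  classical
  have h1 : {S : Set β | S ⊆ Q} = ((↑) : Finset β → Set β) '' ↑hQ.toFinset.powerset := by
    ext S
    constructor
    · intro hS
      have hSf : S.Finite := hQ.subset hS
      refine ⟨hSf.toFinset, ?_, by simp⟩
      simp only [Finset.coe_powerset, mem_preimage, mem_powerset_iff, Finset.coe_subset,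
        ← Finset.coe_subset, Set.Finite.coe_toFinset]
      simpa using hS
    · rintro ⟨u, hu, rfl⟩
      simp only [Finset.coe_powerset, mem_preimage, mem_powerset_iff] at hu
      intro x hx
      have := hu hx
      simpa using this
  rw [h1, Set.ncard_image_of_injective _ Finset.coe_injective, Set.ncard_coe_finset,
    Finset.card_powerset, Set.ncard_eq_toFinset_card _ hQ]

lemma injOn_sUnion_iff {β : Type*} (Q : Set (Set β)) :
    Set.InjOn sUnion {S | S ⊆ Q} ↔ ∀ q ∈ Q, (q \ ⋃₀ (Q \ {q})).Nonempty := by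
  constructor
  · intro hinj q hq
    by_contra hcon
    rw [Set.not_nonempty_iff_eq_empty, Set.diff_eq_empty] at hcon
    have heq : ⋃₀ Q = ⋃₀ (Q \ {q}) := by
      refine le_antisymm (Set.sUnion_subset fun t ht => ?_) (Set.sUnion_mono Set.diff_subset)
      by_cases htq : t = q
      · subst htq; exact hcon.trans (le_refl _) |>.trans (le_refl _)
      · exact Set.subset_sUnion_of_mem ⟨ht, htq⟩
    have := hinj (Set.Subset.refl Q) (Set.diff_subset) heq
    exact ((this.le hq).2 rfl)
  · intro hpt
    have key : ∀ S T : Set (Set β), S ⊆ Q → T ⊆ Q → ⋃₀ S = ⋃₀ T → S ⊆ T := by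
      intro S T hS hT h q hqS
      obtain ⟨x, hxq, hxn⟩ := hpt q (hS hqS)
      have : x ∈ ⋃₀ T := h ▸ Set.subset_sUnion_of_mem hqS hxq
      obtain ⟨t, htT, hxt⟩ := this
      by_cases htq : t = q
      · exact htq ▸ htT
      · have hxn' : ∀ s ∈ Q, ¬ s = q → x ∉ s := by simpa [Set.mem_sUnion] using hxn
        exact absurd hxt (hxn' t (hT htT) htq)
    intro S hS T hT h
    exact le_antisymm (key S T hS hT h) (key T S hT hS h.symm)

lemma injOn_sInter_iff {β : Type*} (Q : Set (Set β)) :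
    Set.InjOn sInter {S | S ⊆ Q} ↔ ∀ q ∈ Q, ((⋂₀ (Q \ {q})) \ q).Nonempty := by
  constructor
  · intro hinj q hq
    by_contra hcon
    rw [Set.not_nonempty_iff_eq_empty, Set.diff_eq_empty] at hcon
    have heq : ⋂₀ (Q \ {q}) = ⋂₀ Q := by
      refine le_antisymm (fun x hx => ?_) (Set.sInter_mono Set.diff_subset)
      intro t ht
      by_cases htq : t = q
      · exact htq ▸ hcon hx
      · exact hx t ⟨ht, htq⟩
    have := hinj (Set.diff_subset) (Set.Subset.refl Q) heq
    exact ((this.ge hq).2 rfl)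
  · intro hpt
    have key : ∀ S T : Set (Set β), S ⊆ Q → T ⊆ Q → ⋂₀ S = ⋂₀ T → S ⊆ T := by
      intro S T hS hT h q hqS
      by_contra hqT
      obtain ⟨x, hxi, hxq⟩ := hpt q (hS hqS)
      have hxT : x ∈ ⋂₀ T := fun t htT => hxi t ⟨hT htT, fun e => hqT (e ▸ htT)⟩
      exact hxq ((h ▸ hxT : x ∈ ⋂₀ S) q hqS)
    intro S hS T hT h
    exact le_antisymm (key S T hS hT h) (key T S hT hS h.symm)


lemma unionSet_eq {α : Type*} (L : Set (List α)) :
    {X | IsUnionLeftQuot L X} = sUnion '' {S | S ⊆ {X : Set (List α) | ∃ w, X = leftQuot L w}} := by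
  ext X
  simp only [mem_setOf_eq, mem_image, IsUnionLeftQuot]
  constructor
  · rintro ⟨W, rfl⟩
    refine ⟨leftQuot L '' W, ?_, ?_⟩
    · rintro _ ⟨w, _, rfl⟩; exact ⟨w, rfl⟩
    · rw [Set.sUnion_image]
  · rintro ⟨S, hS, rfl⟩
    refine ⟨{w | leftQuot L w ∈ S}, ?_⟩
    have hSe : S = leftQuot L '' {w | leftQuot L w ∈ S} := by
      ext t; constructor
      · intro ht; obtain ⟨w, rfl⟩ := hS ht; exact ⟨w, ht, rfl⟩
      · rintro ⟨w, hw, rfl⟩; exact hw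
    rw [← Set.sUnion_image, ← hSe]

lemma interSet_eq {α : Type*} (L : Set (List α)) :
    {X | IsInterLeftQuot L X} = sInter '' {S | S ⊆ {X : Set (List α) | ∃ w, X = leftQuot L w}} := by
  ext X
  simp only [mem_setOf_eq, mem_image, IsInterLeftQuot]
  constructor
  · rintro ⟨W, rfl⟩
    refine ⟨leftQuot L '' W, ?_, ?_⟩
    · rintro _ ⟨w, _, rfl⟩; exact ⟨w, rfl⟩
    · rw [Set.sInter_image]
  · rintro ⟨S, hS, rfl⟩
    refine ⟨{w | leftQuot L w ∈ S}, ?_⟩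
    have hSe : S = leftQuot L '' {w | leftQuot L w ∈ S} := by
      ext t; constructor
      · intro ht; obtain ⟨w, rfl⟩ := hS ht; exact ⟨w, ht, rfl⟩
      · rintro ⟨w, hw, rfl⟩; exact hw
    rw [← Set.sInter_image, ← hSe]

lemma biUnion_ne_eq {α : Type*} (L : Set (List α)) (w : List α) :
    ⋃ u ∈ {u : List α | leftQuot L u ≠ leftQuot L w}, leftQuot L u
      = ⋃₀ ({X : Set (List α) | ∃ v, X = leftQuot L v} \ {leftQuot L w}) := by
  ext x
  simp only [mem_iUnion, exists_prop, mem_setOf_eq, mem_sUnion, mem_diff, mem_singleton_iff]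
  constructor
  · rintro ⟨u, hu, hx⟩; exact ⟨leftQuot L u, ⟨⟨u, rfl⟩, hu⟩, hx⟩
  · rintro ⟨t, ⟨⟨v, rfl⟩, ht⟩, hx⟩; exact ⟨v, ht, hx⟩

lemma biInter_ne_eq {α : Type*} (L : Set (List α)) (w : List α) :
    ⋂ u ∈ {u : List α | leftQuot L u ≠ leftQuot L w}, leftQuot L u
      = ⋂₀ ({X : Set (List α) | ∃ v, X = leftQuot L v} \ {leftQuot L w}) := by
  ext x
  simp only [mem_iInter, mem_setOf_eq, mem_sInter, mem_diff, mem_singleton_iff]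
  constructor
  · rintro h t ⟨⟨v, rfl⟩, ht⟩; exact h v ht
  · rintro h u hu; exact h (leftQuot L u) ⟨⟨u, rfl⟩, hu⟩

/-- for `n > 2`, maximal complexity of both lattices is equivalent
to nonemptiness of the `2n` atomic intersections. -/
theorem union_inter_complexity {α : Type*} [Fintype α] (L : Set (List α))
    (hne : L.Nonempty) (hL : Language.IsRegular L) (n : ℕ)
    (hn : n = {X : Set (List α) | ∃ w : List α, X = leftQuot L w}.ncard)
    (hn2 : 2 < n) :
    ({X : Set (List α) | IsUnionLeftQuot L X}.ncard = 2 ^ n ∧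
      {X : Set (List α) | IsInterLeftQuot L X}.ncard = 2 ^ n) ↔
      ∀ w : List α,
        (leftQuot L w \
          ⋃ u ∈ {u : List α | leftQuot L u ≠ leftQuot L w}, leftQuot L u).Nonempty ∧
        ((⋂ u ∈ {u : List α | leftQuot L u ≠ leftQuot L w}, leftQuot L u) \
          leftQuot L w).Nonempty := by
  classical
  set Q := {X : Set (List α) | ∃ w : List α, X = leftQuot L w} with hQdef
  have hQfin : Q.Finite := quot_finite hL
  have hPfin : {S : Set (Set (List α)) | S ⊆ Q}.Finite := hQfin.finite_subsets
  have hPcard : {S : Set (Set (List α)) | S ⊆ Q}.ncard = 2 ^ n := by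
    rw [ncard_powerset' hQfin, hn]
  have hUiff : {X | IsUnionLeftQuot L X}.ncard = 2 ^ n ↔
      Set.InjOn sUnion {S : Set (Set (List α)) | S ⊆ Q} := by
    rw [unionSet_eq L, ← hPcard, Set.ncard_image_iff hPfin]
  have hIiff : {X | IsInterLeftQuot L X}.ncard = 2 ^ n ↔
      Set.InjOn sInter {S : Set (Set (List α)) | S ⊆ Q} := by
    rw [interSet_eq L, ← hPcard, Set.ncard_image_iff hPfin]
  rw [hUiff, hIiff, injOn_sUnion_iff, injOn_sInter_iff]
  constructor
  · rintro ⟨h1, h2⟩ w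
    exact ⟨by rw [biUnion_ne_eq]; exact h1 _ ⟨w, rfl⟩,
      by rw [biInter_ne_eq]; exact h2 _ ⟨w, rfl⟩⟩
  · intro h
    constructor
    · rintro q ⟨w, rfl⟩
      have := (h w).1
      rwa [biUnion_ne_eq] at this
    · rintro q ⟨w, rfl⟩
      have := (h w).2
      rwa [biInter_ne_eq] at this
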